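/- Let δ be a symmetric strictly causal involution delay function and define f(Δ) = δ(Δ - δ(-Δ)) + Δ - δ(-Δ). If δ is differentiable, then for all Δ > 0 in the domain, f'(Δ) ≥ 1 + δ'(0), and consequently |f(Δ) - Δ̃| ≥ (1 + δ'(0))·|Δ - Δ̃| for any fixed point Δ̃ of f in the same interval as Δ. -/

import Mathlib

/-- For a symmetric strictly causal involution delay function `δ` and
`f Δ = δ (Δ - δ (-Δ)) + Δ - δ (-Δ)`, one has `f' Δ ≥ 1 + δ' 0` for `Δ > 0`,
and consequently `|f Δ - Δ̃| ≥ (1 + δ' 0)·|Δ - Δ̃|` for any positive fixed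
point `Δ̃` of `f`. -/
theorem stmt_9 (δ : ℝ → ℝ)
    (hm : StrictMono δ) (hc : ConcaveOn ℝ Set.univ δ)
    (hd : Differentiable ℝ δ)
    (hinv : ∀ T, -δ (-δ T) = T) (h0 : 0 < δ 0)
    (f : ℝ → ℝ) (hf : ∀ Δ, f Δ = δ (Δ - δ (-Δ)) + Δ - δ (-Δ)) :
    (∀ Δ : ℝ, 0 < Δ → 1 + deriv δ 0 ≤ deriv f Δ) ∧
      ∀ Δt : ℝ, 0 < Δt → f Δt = Δt → ∀ Δ : ℝ, 0 < Δ →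
        (1 + deriv δ 0) * |Δ - Δt| ≤ |f Δ - Δt| := by
  -- derivative of δ is everywhere nonnegative
  have hδnn : ∀ x : ℝ, 0 ≤ deriv δ x := by
    intro x
    have hs := hc.slope_le_deriv (Set.mem_univ x) (Set.mem_univ (x + 1))
      (by linarith) (hd x)
    have : 0 ≤ slope δ x (x + 1) := by
      rw [slope_def_field]
      have h1 : δ x ≤ δ (x + 1) := (hm (by linarith)).le
      have h2 : (0:ℝ) < x + 1 - x := by linarith
      exact div_nonneg (by linarith) h2.le
    linarith
  -- derivative of δ is antitone
  have hanti : AntitoneOn (deriv δ) Set.univ :=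
    hc.antitoneOn_deriv (fun x _ => hd x)
  -- f has derivative (deriv δ (Δ - δ (-Δ)) + 1) * (1 + deriv δ (-Δ))
  have key : ∀ Δ : ℝ,
      HasDerivAt f ((deriv δ (Δ - δ (-Δ)) + 1) * (1 + deriv δ (-Δ))) Δ := by
    intro Δ
    have hneg : HasDerivAt (fun x : ℝ => δ (-x)) (deriv δ (-Δ) * (-1)) Δ :=
      (hd (-Δ)).hasDerivAt.comp Δ (hasDerivAt_neg Δ)
    have hg : HasDerivAt (fun x : ℝ => x - δ (-x)) (1 + deriv δ (-Δ)) Δ := by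
      have := (hasDerivAt_id Δ).sub hneg
      exact this.congr_deriv (by ring)
    have hcomp : HasDerivAt (fun x : ℝ => δ (x - δ (-x)))
        (deriv δ (Δ - δ (-Δ)) * (1 + deriv δ (-Δ))) Δ :=
      (hd (Δ - δ (-Δ))).hasDerivAt.comp Δ hg
    have hsum : HasDerivAt (fun x : ℝ => δ (x - δ (-x)) + x - δ (-x))
        ((deriv δ (Δ - δ (-Δ)) + 1) * (1 + deriv δ (-Δ))) Δ := by
      have := (hcomp.add hg)
      have heq : (fun x : ℝ => δ (x - δ (-x)) + x - δ (-x))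
          = fun x : ℝ => δ (x - δ (-x)) + (x - δ (-x)) := by
        funext x; ring
      rw [heq]
      exact this.congr_deriv (by ring)
    have hfe : f = fun x : ℝ => δ (x - δ (-x)) + x - δ (-x) := funext hf
    rw [hfe]
    exact hsum
  have hfd : Differentiable ℝ f := fun x => (key x).differentiableAt
  have hmain : ∀ Δ : ℝ, 0 < Δ → 1 + deriv δ 0 ≤ deriv f Δ := by
    intro Δ hΔ
    rw [(key Δ).deriv]
    have h1 : deriv δ 0 ≤ deriv δ (-Δ) :=
      hanti (Set.mem_univ (-Δ)) (Set.mem_univ 0) (by linarith)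
    have h2 := hδnn (Δ - δ (-Δ))
    have h3 := hδnn (-Δ)
    nlinarith
  refine ⟨hmain, ?_⟩
  intro Δt hΔt hfix Δ hΔ
  have hδ0 : 0 ≤ deriv δ 0 := hδnn 0
  rcases lt_trichotomy Δ Δt with hlt | heq | hgt
  · obtain ⟨c, hcmem, hceq⟩ := exists_deriv_eq_slope f hlt
      hfd.continuous.continuousOn (fun x _ => (hfd x).differentiableWithinAt)
    have hc0 : 0 < c := lt_trans hΔ hcmem.1
    have hderiv : 1 + deriv δ 0 ≤ deriv f c := hmain c hc0
    have hdiff : f Δt - f Δ = deriv f c * (Δt - Δ) := by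
      rw [eq_div_iff (by linarith : Δt - Δ ≠ 0)] at hceq
      linarith
    rw [hfix] at hdiff
    have habs1 : |Δ - Δt| = Δt - Δ := by rw [abs_sub_comm]; exact abs_of_pos (by linarith)
    have habs2 : |f Δ - Δt| = Δt - f Δ := by
      rw [abs_sub_comm]
      exact abs_of_pos (by nlinarith)
    rw [habs1, habs2]
    nlinarith
  · subst heq
    rw [hfix]
    simp
  · obtain ⟨c, hcmem, hceq⟩ := exists_deriv_eq_slope f hgt
      hfd.continuous.continuousOn (fun x _ => (hfd x).differentiableWithinAt)
    have hc0 : 0 < c := lt_trans hΔt hcmem.1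
    have hderiv : 1 + deriv δ 0 ≤ deriv f c := hmain c hc0
    have hdiff : f Δ - f Δt = deriv f c * (Δ - Δt) := by
      rw [eq_div_iff (by linarith : Δ - Δt ≠ 0)] at hceq
      linarith
    rw [hfix] at hdiff
    have habs1 : |Δ - Δt| = Δ - Δt := abs_of_pos (by linarith)
    have habs2 : |f Δ - Δt| = f Δ - Δt := abs_of_pos (by nlinarith)
    rw [habs1, habs2]
    nlinarith
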